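/- For pairwise distinct primitive types p, q, r, the sequent r, q, p → ((p^∘·q^∘)·r^∘)^∘ is not derivable in L^∘. -/

import Mathlib

/-- Types of the Lambek calculus with the cyclic shift `L^∘`, built from
primitive types `P` by `\` (`ldiv A B = A \ B`), `/` (`rdiv B A = B / A`),
`·` (`mul`) and the cyclic shift `^∘` (`circ`). -/
inductive Fm (P : Type) : Type
  | prim : P → Fm P
  | ldiv : Fm P → Fm P → Fm P
  | rdiv : Fm P → Fm P → Fm P
  | mul  : Fm P → Fm P → Fm P
  | circ : Fm P → Fm P
deriving DecidableEq

open Fm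

/-- Derivability of sequents in the Lambek calculus with the cyclic shift `L^∘`.
The Boolean flag indicates whether the rule (cut) may be used:
`Dv P true` is `L^∘` (with cut), `Dv P false` is its cut-free part. -/
inductive Dv (P : Type) : Bool → List (Fm P) → Fm P → Prop
  | ax (c : Bool) (A : Fm P) :
      Dv P c [A] A
  | ldivL (c : Bool) (Γ Δ Pi : List (Fm P)) (A B C : Fm P) :
      Dv P c (Γ ++ B :: Δ) C → Dv P c Pi A → Pi ≠ [] →
      Dv P c (Γ ++ Pi ++ ldiv A B :: Δ) C
  | ldivR (c : Bool) (Pi : List (Fm P)) (A B : Fm P) :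
      Dv P c (A :: Pi) B → Pi ≠ [] →
      Dv P c Pi (ldiv A B)
  | rdivL (c : Bool) (Γ Δ Pi : List (Fm P)) (A B C : Fm P) :
      Dv P c (Γ ++ B :: Δ) C → Dv P c Pi A → Pi ≠ [] →
      Dv P c (Γ ++ rdiv B A :: (Pi ++ Δ)) C
  | rdivR (c : Bool) (Pi : List (Fm P)) (A B : Fm P) :
      Dv P c (Pi ++ [A]) B → Pi ≠ [] →
      Dv P c Pi (rdiv B A)
  | mulL (c : Bool) (Γ Δ : List (Fm P)) (A B C : Fm P) :
      Dv P c (Γ ++ A :: B :: Δ) C →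
      Dv P c (Γ ++ mul A B :: Δ) C
  | mulR (c : Bool) (Pi Psi : List (Fm P)) (A B : Fm P) :
      Dv P c Pi A → Dv P c Psi B → Pi ≠ [] → Psi ≠ [] →
      Dv P c (Pi ++ Psi) (mul A B)
  | circR (c : Bool) (Pi : List (Fm P)) (A : Fm P) :
      Dv P c Pi A →
      Dv P c Pi (circ A)
  | circL (c : Bool) (A B : Fm P) :
      Dv P c [B] (circ A) →
      Dv P c [circ B] (circ A)
  | circC (c : Bool) (Pi Psi : List (Fm P)) (A : Fm P) :
      Dv P c (Pi ++ Psi) (circ A) → Pi ≠ [] → Psi ≠ [] →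
      Dv P c (Psi ++ Pi) (circ A)
  | cut (Γ Δ Pi : List (Fm P)) (A B : Fm P) :
      Dv P true Pi A → Dv P true (Γ ++ A :: Δ) B → Pi ≠ [] →
      Dv P true (Γ ++ Pi ++ Δ) B

/-- Interpretation of formulas as sets of words over `P` (free monoid model):
`circ` is interpreted as closure under cyclic rotations. -/
def itp {P : Type} : Fm P → List P → Prop
  | Fm.prim t => fun w => w = [t]
  | Fm.ldiv A B => fun w => ∀ u, itp A u → itp B (u ++ w)
  | Fm.rdiv B A => fun w => ∀ u, itp A u → itp B (w ++ u)
  | Fm.mul A B => fun w => ∃ u x, itp A u ∧ itp B x ∧ w = u ++ x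
  | Fm.circ A => fun w => ∃ u, itp A u ∧ u ~r w

/-- Interpretation of lists of formulas (elementwise product of sets). -/
def prods {P : Type} : List (Fm P) → List P → Prop
  | [] => fun w => w = []
  | A :: Γ => fun w => ∃ u x, itp A u ∧ prods Γ x ∧ w = u ++ x

theorem prods_append {P : Type} (Γ Δ : List (Fm P)) (w : List P) :
    prods (Γ ++ Δ) w ↔ ∃ u x, prods Γ u ∧ prods Δ x ∧ w = u ++ x := by
  induction Γ generalizing w with
  | nil =>
      simp only [List.nil_append, prods]
      constructor
      · intro h; exact ⟨[], w, rfl, h, rfl⟩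
      · rintro ⟨u, x, rfl, hx, rfl⟩; simpa using hx
  | cons A Γ ih =>
      simp only [List.cons_append, prods]
      constructor
      · rintro ⟨u, x, hu, hx, rfl⟩
        obtain ⟨y, z, hy, hz, rfl⟩ := (ih x).mp hx
        exact ⟨u ++ y, z, ⟨u, y, hu, hy, rfl⟩, hz, by simp⟩
      · rintro ⟨u, x, ⟨a, b, ha, hb, rfl⟩, hx, rfl⟩
        exact ⟨a, b ++ x, ha, (ih _).mpr ⟨b, x, hb, hx, rfl⟩, by simp⟩

theorem sound {P : Type} {c : Bool} {Γ : List (Fm P)} {A : Fm P}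
    (h : Dv P c Γ A) : ∀ w, prods Γ w → itp A w := by
  induction h with
  | ax c A =>
      rintro w ⟨u, x, hu, hx, rfl⟩
      simp only [prods] at hx; subst hx; simpa using hu
  | ldivL c Γ Δ Pi A B C _ _ _ ih1 ih2 =>
      intro w hw
      rw [show Γ ++ Pi ++ Fm.ldiv A B :: Δ = Γ ++ (Pi ++ Fm.ldiv A B :: Δ) by simp,
        prods_append] at hw
      obtain ⟨g, w', hg, hw', rfl⟩ := hw
      rw [prods_append] at hw'
      obtain ⟨u, w'', hu, hw'', rfl⟩ := hw'
      obtain ⟨x, d, hx, hd, rfl⟩ := hw''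
      have hB : itp B (u ++ x) := hx u (ih2 u hu)
      have := ih1 (g ++ ((u ++ x) ++ d))
        ((prods_append _ _ _).mpr ⟨g, (u ++ x) ++ d, hg, ⟨u ++ x, d, hB, hd, rfl⟩, rfl⟩)
      simpa [List.append_assoc] using this
  | ldivR c Pi A B _ _ ih =>
      intro w hw
      intro u hu
      exact ih (u ++ w) ⟨u, w, hu, hw, rfl⟩
  | rdivL c Γ Δ Pi A B C _ _ _ ih1 ih2 =>
      intro w hw
      rw [prods_append] at hw
      obtain ⟨g, w', hg, hw', rfl⟩ := hw
      obtain ⟨x, w'', hx, hw'', rfl⟩ := hw'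
      rw [prods_append] at hw''
      obtain ⟨u, d, hu, hd, rfl⟩ := hw''
      have hB : itp B (x ++ u) := hx u (ih2 u hu)
      have := ih1 (g ++ ((x ++ u) ++ d))
        ((prods_append _ _ _).mpr ⟨g, (x ++ u) ++ d, hg, ⟨x ++ u, d, hB, hd, rfl⟩, rfl⟩)
      simpa [List.append_assoc] using this
  | rdivR c Pi A B _ _ ih =>
      intro w hw
      intro u hu
      exact ih (w ++ u) ((prods_append _ _ _).mpr ⟨w, u, hw, ⟨u, [], hu, rfl, by simp⟩, rfl⟩)
  | mulL c Γ Δ A B C _ ih =>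
      intro w hw
      rw [prods_append] at hw
      obtain ⟨g, w', hg, hw', rfl⟩ := hw
      obtain ⟨m, d, hm, hd, rfl⟩ := hw'
      obtain ⟨u, x, hu, hx, rfl⟩ := hm
      have := ih (g ++ (u ++ (x ++ d)))
        ((prods_append _ _ _).mpr ⟨g, u ++ (x ++ d), hg, ⟨u, x ++ d, hu, ⟨x, d, hx, hd, rfl⟩, rfl⟩, rfl⟩)
      simpa [List.append_assoc] using this
  | mulR c Pi Psi A B _ _ _ _ ih1 ih2 =>
      intro w hw
      rw [prods_append] at hw
      obtain ⟨u, x, hu, hx, rfl⟩ := hw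
      exact ⟨u, x, ih1 u hu, ih2 x hx, rfl⟩
  | circR c Pi A _ ih =>
      intro w hw
      exact ⟨w, ih w hw, List.IsRotated.refl w⟩
  | circL c A B _ ih =>
      rintro w ⟨u, x, ⟨s, hs, hsu⟩, hx, rfl⟩
      simp only [prods] at hx; subst hx
      obtain ⟨t, ht, hts⟩ := ih s ⟨s, [], hs, rfl, by simp⟩
      exact ⟨t, ht, by simpa using hts.trans hsu⟩
  | circC c Pi Psi A _ _ _ ih =>
      intro w hw
      rw [prods_append] at hw
      obtain ⟨x, u, hx, hu, rfl⟩ := hw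
      obtain ⟨t, ht, hrot⟩ := ih (u ++ x) ((prods_append _ _ _).mpr ⟨u, x, hu, hx, rfl⟩)
      exact ⟨t, ht, hrot.trans (List.isRotated_append)⟩
  | cut Γ Δ Pi A B _ _ _ ih1 ih2 =>
      intro w hw
      rw [show Γ ++ Pi ++ Δ = Γ ++ (Pi ++ Δ) by simp, prods_append] at hw
      obtain ⟨g, w', hg, hw', rfl⟩ := hw
      rw [prods_append] at hw'
      obtain ⟨u, d, hu, hd, rfl⟩ := hw'
      exact ih2 (g ++ (u ++ d))
        ((prods_append _ _ _).mpr ⟨g, u ++ d, hg, ⟨u, d, ih1 u hu, hd, rfl⟩, rfl⟩)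

theorem rot_singleton {P : Type} {a : P} {w : List P} (h : [a] ~r w) : w = [a] :=
  List.perm_singleton.mp h.perm.symm

open Fm in
/-- For pairwise distinct primitive types `p`, `q`, `r`, the sequent
`r, q, p → ((p^∘·q^∘)·r^∘)^∘` is not derivable in `L^∘`. -/
theorem Lcirc_underivable (P : Type) (p q r : P)
    (hpq : p ≠ q) (hqr : q ≠ r) (hpr : p ≠ r) :
    ¬ Dv P true [prim r, prim q, prim p]
        (circ (mul (mul (circ (prim p)) (circ (prim q))) (circ (prim r)))) := by
  intro hder
  have h := sound hder [r, q, p]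
    ⟨[r], [q, p], rfl, ⟨[q], [p], rfl, ⟨[p], [], rfl, rfl, rfl⟩, rfl⟩, rfl⟩
  obtain ⟨u, hu, hrot⟩ := h
  obtain ⟨m, x3, hm, hx3, rfl⟩ := hu
  obtain ⟨x1, x2, hx1, hx2, rfl⟩ := hm
  obtain ⟨s1, hs1, hr1⟩ := hx1
  obtain ⟨s2, hs2, hr2⟩ := hx2
  obtain ⟨s3, hs3, hr3⟩ := hx3
  simp only [itp] at hs1 hs2 hs3
  subst hs1; subst hs2; subst hs3
  have e1 := rot_singleton hr1
  have e2 := rot_singleton hr2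
  have e3 := rot_singleton hr3
  subst e1; subst e2; subst e3
  obtain ⟨n, hn⟩ := hrot
  simp only [List.append_assoc, List.cons_append, List.nil_append] at hn
  rw [← List.rotate_mod] at hn
  have hlt : n % 3 < 3 := Nat.mod_lt _ (by norm_num)
  interval_cases h : n % 3 <;>
    simp [List.rotate] at hn <;> tauto
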